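/- arXiv:cond-mat/9909233 — 7 statements merged into one kernel-verified Lean document; each statement's English description precedes it below -/
import Mathlib

section
/- For every comparator circuit C on W wires, every wire index i in Fin W, and every Boolean value b, there exists an output wire index j (depending only on C, i and b, not on the other inputs) such that for every input assignment x : Fin W → Bool with x i = b, the output satisfies eval(C, x) j = b. -/
/-- Applying a single comparator gate `g = (i, j)`: wire `i` receives the
minimum (AND) of the two incoming values and wire `j` receives the maximum (OR). -/
def CompCircuit.applyGate {ι : Type*} [DecidableEq ι] (g : ι × ι) (v : ι → Bool) : ι → Bool :=
  fun k => if k = g.1 then v g.1 && v g.2 else if k = g.2 then v g.1 || v g.2 else v k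

/-- Evaluating a comparator circuit, given as a list of gates processed in order. -/
def CompCircuit.eval {ι : Type*} [DecidableEq ι] (C : List (ι × ι)) (x : ι → Bool) : ι → Bool :=
  C.foldl (fun v g => CompCircuit.applyGate g v) x

/-- Where a known bit `b` on wire `j` goes after applying gate `g`. -/
def CompCircuit.track {ι : Type*} [DecidableEq ι] (b : Bool) (g : ι × ι) (j : ι) : ι :=
  if j = g.1 ∨ j = g.2 then (if b then g.2 else g.1) else j

lemma CompCircuit.track_spec {ι : Type*} [DecidableEq ι] (b : Bool) (g : ι × ι)
    (hg : g.1 ≠ g.2) (v : ι → Bool) (j : ι) (h : v j = b) :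
    CompCircuit.applyGate g v (CompCircuit.track b g j) = b := by
  unfold CompCircuit.track CompCircuit.applyGate
  by_cases hj : j = g.1 ∨ j = g.2
  · simp only [hj, if_true]
    cases b with
    | true =>
      rcases hj with h1 | h1 <;> subst h1 <;> simp [Ne.symm hg, h]
    | false =>
      rcases hj with h1 | h1 <;> subst h1 <;> simp [hg, h]
  · push_neg at hj
    simp [hj.1, hj.2, hj, h]

/-- For every comparator circuit `C` on `W` wires, every wire `i` and
every Boolean `b`, there is an output wire `j`, depending only on `C`, `i` and `b`,
such that for every input `x` with `x i = b` the output satisfies `eval C x j = b`. -/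
theorem comparator_circuit_propagates_known_input
    {W : ℕ} (C : List (Fin W × Fin W)) (hC : ∀ g ∈ C, g.1 ≠ g.2) (i : Fin W) (b : Bool) :
    ∃ j : Fin W, ∀ x : Fin W → Bool, x i = b → CompCircuit.eval C x j = b := by
  refine ⟨C.foldl (fun j g => CompCircuit.track b g j) i, ?_⟩
  induction C generalizing i with
  | nil => intro x hx; simpa [CompCircuit.eval] using hx
  | cons g C ih =>
    intro x hx
    have hg := hC g List.mem_cons_self
    have := ih (fun g hgm => hC g (List.mem_cons_of_mem _ hgm))
      (CompCircuit.track b g i) (CompCircuit.applyGate g x)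
      (CompCircuit.track_spec b g hg x i hx)
    simpa [CompCircuit.eval, List.foldl_cons] using this
end

section
/- Let P (particles) and Σ (sites) be finite sets and let M = ((i_1, s_1), …, (i_T, s_T)) be a finite list of moves in P × Σ. Then there is a comparator circuit C on |P| + |Σ| wires with exactly T gates — the t-th gate being the comparator whose AND-output goes to the wire of particle i_t and whose OR-output goes to the wire of site s_t — such that for every initial state (active : P → Bool, occupied : Σ → Bool), the final state obtained by executing the moves of M in order under the internal-DLA move dynamics equals the evaluation eval(C, ·) of C on the input assignment that places active on the particle wires and occupied on the site wires. That is, predicting internal DLA from a list of T moves reduces to evaluating a comparator circuit of size T. -/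
/-- The internal-DLA move dynamics: executing the move `(i, s)` updates
`occupied' s = occupied s || active i` and `active' i = occupied s && active i`,
leaving all other values unchanged. -/
def IDLA.moveStep {P Λ : Type*} [DecidableEq P] [DecidableEq Λ]
    (st : (P → Bool) × (Λ → Bool)) (m : P × Λ) : (P → Bool) × (Λ → Bool) :=
  (fun p => if p = m.1 then st.2 m.2 && st.1 m.1 else st.1 p,
   fun s => if s = m.2 then st.2 m.2 || st.1 m.1 else st.2 s)

/-- Executing a list of moves in order. -/
def IDLA.run {P Λ : Type*} [DecidableEq P] [DecidableEq Λ]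
    (M : List (P × Λ)) (st : (P → Bool) × (Λ → Bool)) : (P → Bool) × (Λ → Bool) :=
  M.foldl IDLA.moveStep st

private lemma idla_key {P Λ : Type*} [DecidableEq P] [DecidableEq Λ]
    (M : List (P × Λ)) :
    ∀ (active : P → Bool) (occupied : Λ → Bool),
      CompCircuit.eval (M.map (fun m => (Sum.inl m.1, Sum.inr m.2)))
        (Sum.elim active occupied)
      = Sum.elim (IDLA.run M (active, occupied)).1 (IDLA.run M (active, occupied)).2 := by
  induction M with
  | nil => intro a o; funext k; cases k <;> rfl
  | cons m M ih =>
    intro a o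
    have h1 : CompCircuit.applyGate (Sum.inl m.1, Sum.inr m.2) (Sum.elim a o)
        = Sum.elim (IDLA.moveStep (a, o) m).1 (IDLA.moveStep (a, o) m).2 := by
      funext k
      cases k with
      | inl p =>
        simp [CompCircuit.applyGate, IDLA.moveStep, Bool.and_comm]
      | inr s =>
        simp [CompCircuit.applyGate, IDLA.moveStep, Bool.or_comm]
    simp only [List.map_cons, CompCircuit.eval, IDLA.run, List.foldl_cons]
    rw [show (List.foldl (fun v g => CompCircuit.applyGate g v)
          (CompCircuit.applyGate (Sum.inl m.1, Sum.inr m.2) (Sum.elim a o))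
          (M.map (fun m => (Sum.inl m.1, Sum.inr m.2)))) =
        CompCircuit.eval (M.map (fun m => (Sum.inl m.1, Sum.inr m.2)))
          (Sum.elim (IDLA.moveStep (a, o) m).1 (IDLA.moveStep (a, o) m).2) from by
      rw [h1]; rfl]
    rw [ih]
    rfl

/-- For finite sets `P` of particles and `Λ` of sites and any list `M`
of `T` moves, there is a comparator circuit `C` on the `|P| + |Λ|` wires `P ⊕ Λ` with
exactly `T` gates --- the `t`-th gate being the comparator whose AND-output goes to the
wire of particle `i_t` and whose OR-output goes to the wire of site `s_t` --- such that
for every initial state `(active, occupied)`, the final state of the internal-DLA move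
dynamics equals the evaluation of `C` on the corresponding input assignment. -/
theorem internal_dla_prediction_in_CC
    {P Λ : Type*} [Fintype P] [Fintype Λ] [DecidableEq P] [DecidableEq Λ]
    (M : List (P × Λ)) :
    ∃ C : List ((P ⊕ Λ) × (P ⊕ Λ)),
      C.length = M.length ∧
      (∀ g ∈ C, g.1 ≠ g.2) ∧
      C = M.map (fun m => (Sum.inl m.1, Sum.inr m.2)) ∧
      ∀ (active : P → Bool) (occupied : Λ → Bool),
        (∀ p, (IDLA.run M (active, occupied)).1 p
            = CompCircuit.eval C (Sum.elim active occupied) (Sum.inl p)) ∧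
        (∀ s, (IDLA.run M (active, occupied)).2 s
            = CompCircuit.eval C (Sum.elim active occupied) (Sum.inr s)) := by
  refine ⟨M.map (fun m => (Sum.inl m.1, Sum.inr m.2)), by simp, ?_, rfl, ?_⟩
  · intro g hg
    simp only [List.mem_map] at hg
    obtain ⟨m, -, rfl⟩ := hg
    simp
  · intro a o
    have h := idla_key M a o
    constructor
    · intro p; exact (congrFun h (Sum.inl p)).symm
    · intro s; exact (congrFun h (Sum.inr s)).symm
end

section
/- Let S be a set of sites, let a, b, c be pairwise distinct sites with c ∉ S, and let p = (p_0, …, p_ℓ) be a finite path on which a, b and c occur, with the first occurrence of a before the first occurrence of b before the first occurrence of c, and such that every site of p occurring strictly before the first occurrence of c, other than a and b, belongs to S. Let S' = deposit(S, p). Then: a ∈ S'; b ∈ S' if and only if (a ∈ S or b ∈ S); c ∈ S' if and only if (a ∈ S and b ∈ S); and S' agrees with S on every site other than a, b, c he. In other words, a single internal-DLA particle walking along p implements a comparator gate on the occupation bits of a and b, writing the OR to b and the AND to c. -/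
/-- Single-particle internal DLA deposition: given a set `S` of occupied sites and a
finite path `p`, the particle sticks at the first site of `p` not in `S`, and the new
occupied set is `S` together with that site; if every site of `p` lies in `S`, the
occupied set is unchanged. -/

lemma aux_not_mem_take_indexOf {α : Type*} [DecidableEq α] (p : List α) (x : α) :
    x ∉ p.take (p.idxOf x) := by
  induction p with
  | nil => simp
  | cons y t ih =>
    by_cases hxy : y = x
    · subst hxy; simp [List.idxOf_cons_self]
    · rw [List.idxOf_cons_ne _ hxy]
      simp only [List.take_succ_cons, List.mem_cons, not_or]
      exact ⟨fun h => hxy h.symm, ih⟩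

lemma aux_take_subset_take {α : Type*} {m n : ℕ} (h : m ≤ n) (p : List α) :
    p.take m ⊆ p.take n := by
  intro z hz
  have hmn : p.take m = (p.take n).take m := by rw [List.take_take, Nat.min_eq_left h]
  rw [hmn] at hz
  exact List.take_subset _ _ hz

lemma aux_find_first {α : Type*} [DecidableEq α] (S : Finset α) (p : List α) (x : α)
    (hx : x ∈ p) (hxS : x ∉ S) (h : ∀ z ∈ p.take (p.idxOf x), z ∈ S) :
    p.find? (fun z => decide (z ∉ S)) = some x := by
  induction p with
  | nil => simp at hx
  | cons y t ih =>
    by_cases hxy : y = x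
    · subst hxy
      rw [List.find?_cons_of_pos (by simpa using hxS)]
    · have hix : (y :: t).idxOf x = t.idxOf x + 1 :=
        List.idxOf_cons_ne _ hxy
      have hyS : y ∈ S := by
        apply h y; rw [hix]; simp
      rw [List.find?_cons_of_neg (by simpa using hyS)]
      apply ih (by cases hx with | head => exact absurd rfl hxy | tail _ h' => exact h')
      intro z hz
      apply h z; rw [hix]; simpa using Or.inr hz

def IDLA.deposit {α : Type*} [DecidableEq α] (S : Finset α) (p : List α) : Finset α :=
  match p.find? (fun z => decide (z ∉ S)) with
  | some z => insert z S
  | none => S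

/-- Let `a, b, c` be pairwise distinct sites with `c ∉ S`, occurring on
the path `p` with the first occurrence of `a` before the first occurrence of `b` before
the first occurrence of `c`, and suppose every site of `p` occurring strictly before the
first occurrence of `c`, other than `a` and `b`, belongs to `S`.  Then after depositing a
single particle along `p`: `a` is occupied; `b` is occupied iff (`a ∈ S` or `b ∈ S`);
`c` is occupied iff (`a ∈ S` and `b ∈ S`); and all other sites are unchanged.  Thus a
single internal-DLA particle implements a comparator gate on the occupation bits of `a`
and `b`, writing the OR to `b` and the AND to `c`. -/
theorem walk_implements_comparator_gate {α : Type*} [DecidableEq α]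
    (S : Finset α) (a b c : α) (p : List α)
    (hab : a ≠ b) (hac : a ≠ c) (hbc : b ≠ c) (hcS : c ∉ S)
    (ha : a ∈ p) (hb : b ∈ p) (hc : c ∈ p)
    (hab' : p.idxOf a < p.idxOf b) (hbc' : p.idxOf b < p.idxOf c)
    (hS : ∀ z ∈ p.take (p.idxOf c), z ≠ a → z ≠ b → z ∈ S) :
    a ∈ IDLA.deposit S p ∧
    (b ∈ IDLA.deposit S p ↔ (a ∈ S ∨ b ∈ S)) ∧
    (c ∈ IDLA.deposit S p ↔ (a ∈ S ∧ b ∈ S)) ∧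
    (∀ z, z ≠ a → z ≠ b → z ≠ c → (z ∈ IDLA.deposit S p ↔ z ∈ S)) := by
  by_cases haS : a ∈ S
  · by_cases hbS : b ∈ S
    · -- particle sticks at c
      have hfind : p.find? (fun z => decide (z ∉ S)) = some c := by
        apply aux_find_first S p c hc hcS
        intro z hz
        by_cases hza : z = a
        · subst hza; exact haS
        by_cases hzb : z = b
        · subst hzb; exact hbS
        exact hS z hz hza hzb
      have hdep : IDLA.deposit S p = insert c S := by
        unfold IDLA.deposit; rw [hfind]
      rw [hdep]
      refine ⟨?_, ?_, ?_, ?_⟩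
      · exact Finset.mem_insert_of_mem haS
      · simp [hbS]
      · simp [haS, hbS]
      · intro z _ _ hzc
        simp [Finset.mem_insert, hzc]
    · -- particle sticks at b
      have hfind : p.find? (fun z => decide (z ∉ S)) = some b := by
        apply aux_find_first S p b hb hbS
        intro z hz
        have hzb : z ≠ b := fun h => aux_not_mem_take_indexOf p b (h ▸ hz)
        have hzc : z ∈ p.take (p.idxOf c) :=
          aux_take_subset_take (le_of_lt hbc') p hz
        by_cases hza : z = a
        · subst hza; exact haS
        exact hS z hzc hza hzb
      have hdep : IDLA.deposit S p = insert b S := by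
        unfold IDLA.deposit; rw [hfind]
      rw [hdep]
      refine ⟨Finset.mem_insert_of_mem haS, ?_, ?_, ?_⟩
      · simp [haS]
      · simp [Finset.mem_insert, hbc.symm, hbS, hcS]
      · intro z _ hzb _
        simp [Finset.mem_insert, hzb]
  · -- particle sticks at a
    have haS' : a ∉ S := haS
    have hfind : p.find? (fun z => decide (z ∉ S)) = some a := by
      apply aux_find_first S p a ha haS'
      intro z hz
      have hza : z ≠ a := fun h => aux_not_mem_take_indexOf p a (h ▸ hz)
      have hzb : z ≠ b := fun h =>
        aux_not_mem_take_indexOf p b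
          (h ▸ aux_take_subset_take (le_of_lt hab') p hz)
      exact hS z (aux_take_subset_take
        (le_of_lt (lt_trans hab' hbc')) p hz) hza hzb
    have hdep : IDLA.deposit S p = insert a S := by
      unfold IDLA.deposit; rw [hfind]
    rw [hdep]
    refine ⟨Finset.mem_insert_self _ _, ?_, ?_, ?_⟩
    · simp [Finset.mem_insert, hab.symm, haS]
    · simp [Finset.mem_insert, hac.symm, hcS, haS]
    · intro z hza _ _
      simp [Finset.mem_insert, hza]
end

section
/- For every comparator circuit C with N gates on W wires there exist: a finite set Q ⊂ ℤ² containing a designated origin site o, pairwise distinct input sites in(1), …, in(W) ∈ ℤ² \ Q, pairwise distinct output sites out(1), …, out(W) ∈ ℤ², and a sequence of N finite nearest-neighbour lattice paths p_1, …, p_N in ℤ², each starting at o and each of length at most C₀·(N + 1) for an absolute constant C₀, all depending only on C (not on the input), such that for every input assignment x : Fin W → Bool the following holds: starting from the occupied set S_0 = Q ∪ { in(w) : x w = true } and sequentially depositing N particles along p_1, …, p_N (each particle sticking at the first site of its path not in the current occupied set), the final occupied set S_N satisfies out(j) ∈ S_N if and only if eval(C, x) j = true, for every wire j. Thus evaluating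 any comparator circuit reduces to predicting internal DLA on the square lattice with one particle at a time, with total simulation time O(N²). -/
/-- Two sites of the square lattice `ℤ²` are nearest neighbours. -/
def IDLA.Adj (u v : ℤ × ℤ) : Prop :=
  (u.1 - v.1).natAbs + (u.2 - v.2).natAbs = 1

namespace IDLAHard

/-- Fresh site used by the gate with index `t`. -/
def cfresh (t : ℕ) : ℤ × ℤ := (-(t : ℤ) - 1, 1)

/-- A ray of `n+1` integers starting at `a`, stepping by `d`. -/
def ray (a d : ℤ) : ℕ → List ℤ
  | 0 => [a]
  | n + 1 => a :: ray (a + d) d n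

/-- The horizontal segment of integers from `a` to `b` (inclusive). -/
def hseg (a b : ℤ) : List ℤ :=
  if a ≤ b then ray a 1 (b - a).toNat else ray a (-1) (a - b).toNat

/-- Path for one gate: run along the corridor `y = 0`, poking up at columns
`A`, then `B`, then `Cc`. -/
def gatePath (A B Cc : ℤ) : List (ℤ × ℤ) :=
  (hseg 0 A).map (fun x => (x, 0)) ++ [(A, 1)] ++ (hseg A B).map (fun x => (x, 0)) ++
    [(B, 1)] ++ (hseg B Cc).map (fun x => (x, 0)) ++ [(Cc, 1)]

/-- Paths for all gates, given current wire sites `σ` and current time `t`. -/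
def mkPaths {W : ℕ} : (Fin W → ℤ × ℤ) → ℕ → List (Fin W × Fin W) → List (List (ℤ × ℤ))
  | _, _, [] => []
  | σ, t, g :: rest =>
      gatePath (σ g.1).1 (σ g.2).1 (-(t : ℤ) - 1) ::
        mkPaths (Function.update σ g.1 (cfresh t)) (t + 1) rest

/-- Final wire sites after processing the gates. -/
def finalSites {W : ℕ} : (Fin W → ℤ × ℤ) → ℕ → List (Fin W × Fin W) → (Fin W → ℤ × ℤ)
  | σ, _, [] => σ
  | σ, t, g :: rest => finalSites (Function.update σ g.1 (cfresh t)) (t + 1) rest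

/-- The corridor. -/
noncomputable def Qset (N : ℕ) : Finset (ℤ × ℤ) :=
  (Finset.Icc (-(N : ℤ)) (2 * N)).image (fun x => (x, 0))

lemma mem_Qset {N : ℕ} {x : ℤ} (h1 : -(N : ℤ) ≤ x) (h2 : x ≤ 2 * N) :
    ((x, 0) : ℤ × ℤ) ∈ Qset N := by
  simp only [Qset, Finset.mem_image]
  exact ⟨x, Finset.mem_Icc.2 ⟨h1, h2⟩, rfl⟩

lemma Qset_snd {N : ℕ} {p : ℤ × ℤ} (h : p ∈ Qset N) : p.2 = 0 := by
  simp only [Qset, Finset.mem_image] at h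
  obtain ⟨x, -, rfl⟩ := h
  rfl

lemma getLast?_cons_ne {α : Type*} (a : α) {l : List α} (h : l ≠ []) :
    (a :: l).getLast? = l.getLast? := by
  cases l with
  | nil => exact absurd rfl h
  | cons b l' => rfl

lemma some_or {α : Type*} (a : α) (o : Option α) : (Option.some a).or o = some a := rfl

lemma ray_ne_nil (a d : ℤ) (n : ℕ) : ray a d n ≠ [] := by
  cases n <;> simp [ray]

lemma ray_head? (a d : ℤ) (n : ℕ) : (ray a d n).head? = some a := by
  cases n <;> simp [ray]

lemma ray_getLast? (a d : ℤ) (n : ℕ) : (ray a d n).getLast? = some (a + d * n) := by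
  induction n generalizing a with
  | zero => simp [ray]
  | succ n ih =>
      rw [ray, getLast?_cons_ne _ (ray_ne_nil _ _ _), ih]
      congr 1
      push_cast
      ring

lemma ray_length (a d : ℤ) (n : ℕ) : (ray a d n).length = n + 1 := by
  induction n generalizing a with
  | zero => simp [ray]
  | succ n ih => simp [ray, ih]

lemma mem_ray {a d x : ℤ} {n : ℕ} (h : x ∈ ray a d n) : ∃ k : ℕ, k ≤ n ∧ x = a + d * k := by
  induction n generalizing a with
  | zero =>
      simp [ray] at h
      exact ⟨0, le_rfl, by simp [h]⟩
  | succ n ih =>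
      rw [ray, List.mem_cons] at h
      rcases h with rfl | h
      · exact ⟨0, by omega, by simp⟩
      · obtain ⟨k, hk, rfl⟩ := ih h
        exact ⟨k + 1, by omega, by push_cast; ring⟩

lemma ray_chain' (a : ℤ) {d : ℤ} (hd : d = 1 ∨ d = -1) (n : ℕ) :
    List.Chain' IDLA.Adj ((ray a d n).map (fun x => ((x, 0) : ℤ × ℤ))) := by
  induction n generalizing a with
  | zero => simp [ray, List.Chain']
  | succ n ih =>
      rw [ray, List.map_cons]
      refine List.isChain_cons.2 ⟨?_, ih (a + d)⟩
      intro y hy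
      rw [List.head?_map, ray_head? (a + d) d n] at hy
      simp only [Option.map_some, Option.mem_def, Option.some.injEq] at hy
      subst hy
      unfold IDLA.Adj
      rcases hd with rfl | rfl <;> simp

lemma hseg_ne_nil (a b : ℤ) : hseg a b ≠ [] := by
  unfold hseg; split <;> exact ray_ne_nil _ _ _

lemma hseg_head? (a b : ℤ) : (hseg a b).head? = some a := by
  unfold hseg; split <;> exact ray_head? _ _ _

lemma hseg_getLast? (a b : ℤ) : (hseg a b).getLast? = some b := by
  unfold hseg
  split <;> rw [ray_getLast?] <;> [skip; skip] <;> congr 1 <;> omega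

lemma hseg_length {a b : ℤ} : (hseg a b).length = (b - a).natAbs + 1 := by
  unfold hseg
  split <;> rw [ray_length] <;> rcases Int.natAbs_eq (b - a) with he | he <;> omega

lemma mem_hseg {a b x : ℤ} (h : x ∈ hseg a b) :
    (a ≤ x ∧ x ≤ b) ∨ (b ≤ x ∧ x ≤ a) := by
  unfold hseg at h
  split at h <;> obtain ⟨k, hk, rfl⟩ := mem_ray h <;> omega

lemma hseg_chain' (a b : ℤ) :
    List.Chain' IDLA.Adj ((hseg a b).map (fun x => ((x, 0) : ℤ × ℤ))) := by
  unfold hseg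
  split
  · exact ray_chain' a (Or.inl rfl) _
  · exact ray_chain' a (Or.inr rfl) _

lemma find?_hseg_none {S : Finset (ℤ × ℤ)} {a b : ℤ}
    (h : ∀ x ∈ hseg a b, ((x, 0) : ℤ × ℤ) ∈ S) :
    ((hseg a b).map (fun x => ((x, 0) : ℤ × ℤ))).find?
      (fun z => decide (z ∉ S)) = none := by
  rw [List.find?_eq_none]
  intro z hz
  rw [List.mem_map] at hz
  obtain ⟨x, hx, rfl⟩ := hz
  simpa using h x hx

/-- Evaluation of one deposit along a gate path. -/
lemma deposit_gatePath {S : Finset (ℤ × ℤ)} {A B Cc : ℤ}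
    (h1 : ∀ x ∈ hseg 0 A, ((x, 0) : ℤ × ℤ) ∈ S)
    (h2 : ∀ x ∈ hseg A B, ((x, 0) : ℤ × ℤ) ∈ S)
    (h3 : ∀ x ∈ hseg B Cc, ((x, 0) : ℤ × ℤ) ∈ S)
    (hC : ((Cc, 1) : ℤ × ℤ) ∉ S) :
    IDLA.deposit S (gatePath A B Cc) =
      if ((A, 1) : ℤ × ℤ) ∈ S then
        (if ((B, 1) : ℤ × ℤ) ∈ S then insert (Cc, 1) S else insert (B, 1) S)
      else insert (A, 1) S := by
  unfold IDLA.deposit gatePath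
  rw [List.find?_append, List.find?_append, List.find?_append, List.find?_append,
    List.find?_append, find?_hseg_none h1, find?_hseg_none h2, find?_hseg_none h3]
  by_cases hA : ((A, 1) : ℤ × ℤ) ∈ S <;> by_cases hB : ((B, 1) : ℤ × ℤ) ∈ S <;>
    simp [List.find?, hA, hB, hC]

lemma gatePath_head? (A B Cc : ℤ) : (gatePath A B Cc).head? = some ((0 : ℤ), (0 : ℤ)) := by
  unfold gatePath
  rw [List.head?_append, List.head?_append, List.head?_append, List.head?_append,
    List.head?_append, List.head?_map, hseg_head?]
  rfl

lemma gatePath_chain' (A B Cc : ℤ) : List.Chain' IDLA.Adj (gatePath A B Cc) := by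
  unfold gatePath
  rw [List.append_assoc, List.append_assoc, List.append_assoc, List.append_assoc]
  unfold List.Chain'; rw [List.isChain_append]
  refine ⟨hseg_chain' 0 A, ?_, ?_⟩
  · rw [List.isChain_append]
    refine ⟨List.isChain_singleton _, ?_, ?_⟩
    · rw [List.isChain_append]
      refine ⟨hseg_chain' A B, ?_, ?_⟩
      · rw [List.isChain_append]
        refine ⟨List.isChain_singleton _, ?_, ?_⟩
        · rw [List.isChain_append]
          refine ⟨hseg_chain' B Cc, List.isChain_singleton _, ?_⟩
          intro p hp q hq
          rw [List.getLast?_map, hseg_getLast?] at hp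
          simp only [Option.map_some, Option.mem_def, Option.some.injEq] at hp
          simp only [List.head?_cons, Option.mem_def, Option.some.injEq] at hq
          subst hp; subst hq
          unfold IDLA.Adj; simp
        · intro p hp q hq
          simp only [List.getLast?_singleton, Option.mem_def, Option.some.injEq] at hp
          rw [List.head?_append, List.head?_map, hseg_head?] at hq
          simp only [Option.map_some, Option.or_some, some_or, Option.mem_def,
            Option.some.injEq] at hq
          subst hp; subst hq
          unfold IDLA.Adj; simp
      · intro p hp q hq
        rw [List.getLast?_map, hseg_getLast?] at hp
        simp only [Option.map_some, Option.mem_def, Option.some.injEq] at hp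
        rw [List.head?_append, List.head?_cons, some_or] at hq
        simp only [Option.mem_def, Option.some.injEq] at hq
        subst hp; subst hq
        unfold IDLA.Adj; simp
    · intro p hp q hq
      simp only [List.getLast?_singleton, Option.mem_def, Option.some.injEq] at hp
      rw [List.head?_append, List.head?_map, hseg_head?] at hq
      simp only [Option.map_some, Option.or_some, some_or, Option.mem_def, Option.some.injEq] at hq
      subst hp; subst hq
      unfold IDLA.Adj; simp
  · intro p hp q hq
    rw [List.getLast?_map, hseg_getLast?] at hp
    simp only [Option.map_some, Option.mem_def, Option.some.injEq] at hp
    rw [List.head?_append, List.head?_cons, some_or] at hq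
    simp only [Option.mem_def, Option.some.injEq] at hq
    subst hp; subst hq
    unfold IDLA.Adj; simp

lemma gatePath_length {N : ℕ} {A B Cc : ℤ}
    (hA1 : -(N : ℤ) ≤ A) (hA2 : A ≤ 2 * N) (hB1 : -(N : ℤ) ≤ B) (hB2 : B ≤ 2 * N)
    (hC1 : -(N : ℤ) ≤ Cc) (hC2 : Cc ≤ 2 * N) :
    (gatePath A B Cc).length ≤ 16 * (N + 1) := by
  unfold gatePath
  simp only [List.length_append, List.length_map, List.length_cons, List.length_nil,
    hseg_length]
  have e1 := Int.natAbs_eq (A - 0)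
  have e2 := Int.natAbs_eq (B - A)
  have e3 := Int.natAbs_eq (Cc - B)
  rcases e1 with e1 | e1 <;> rcases e2 with e2 | e2 <;> rcases e3 with e3 | e3 <;> omega

lemma update_injective {W : ℕ} {σ : Fin W → ℤ × ℤ} (hσ : Function.Injective σ)
    {c : ℤ × ℤ} (hc : ∀ w, σ w ≠ c) (i : Fin W) :
    Function.Injective (Function.update σ i c) := by
  intro a b hab
  by_cases ha : a = i <;> by_cases hb : b = i
  · rw [ha, hb]
  · exfalso
    rw [Function.update_apply, Function.update_apply, if_pos ha, if_neg hb] at hab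
    exact hc b hab.symm
  · exfalso
    rw [Function.update_apply, Function.update_apply, if_neg ha, if_pos hb] at hab
    exact hc a hab
  · rw [Function.update_apply, Function.update_apply, if_neg ha, if_neg hb] at hab
    exact hσ hab

lemma mkPaths_length {W : ℕ} :
    ∀ (C' : List (Fin W × Fin W)) (σ : Fin W → ℤ × ℤ) (t : ℕ),
      (mkPaths σ t C').length = C'.length := by
  intro C'
  induction C' with
  | nil => intro σ t; rfl
  | cons g rest ih => intro σ t; simp [mkPaths, ih]

lemma mkPaths_props {W N : ℕ} :
    ∀ (C' : List (Fin W × Fin W)) (t : ℕ) (σ : Fin W → ℤ × ℤ),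
      t + C'.length ≤ N →
      (∀ w, -(t : ℤ) ≤ (σ w).1) →
      (∀ g ∈ C', (σ g.1).1 ≤ 2 * N ∧ (σ g.2).1 ≤ 2 * N) →
      ∀ p ∈ mkPaths σ t C', p.head? = some ((0 : ℤ), (0 : ℤ)) ∧
        List.Chain' IDLA.Adj p ∧ p.length ≤ 16 * (N + 1) := by
  intro C'
  induction C' with
  | nil => intro t σ _ _ _ p hp; simp [mkPaths] at hp
  | cons g rest ih =>
      intro t σ hlen hlow hgate p hp
      have ht : t + 1 ≤ N := by simp at hlen; omega
      rw [mkPaths, List.mem_cons] at hp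
      rcases hp with rfl | hp
      · refine ⟨gatePath_head? _ _ _, gatePath_chain' _ _ _, ?_⟩
        have h1 := hlow g.1
        have h2 := hlow g.2
        have h3 := (hgate g (List.mem_cons_self)).1
        have h4 := (hgate g (List.mem_cons_self)).2
        exact gatePath_length (by omega) h3 (by omega) h4 (by omega) (by omega)
      · refine ih (t + 1) _ (by simp at hlen ⊢; omega) ?_ ?_ p hp
        · intro w
          rw [Function.update_apply]
          split
          · simp only [cfresh]; push_cast; omega
          · have := hlow w; push_cast; omega
        · intro g' hg'
          constructor
          · rw [Function.update_apply]
            split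
            · simp only [cfresh]; omega
            · exact (hgate g' (List.mem_cons_of_mem _ hg')).1
          · rw [Function.update_apply]
            split
            · simp only [cfresh]; omega
            · exact (hgate g' (List.mem_cons_of_mem _ hg')).2

lemma finalSites_inj {W : ℕ} :
    ∀ (C' : List (Fin W × Fin W)) (t : ℕ) (σ : Fin W → ℤ × ℤ),
      Function.Injective σ →
      (∀ w, -(t : ℤ) ≤ (σ w).1) →
      Function.Injective (finalSites σ t C') := by
  intro C'
  induction C' with
  | nil => intro t σ hσ _; exact hσ
  | cons g rest ih =>
      intro t σ hσ hlow
      refine ih (t + 1) _ (update_injective hσ ?_ g.1) ?_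
      · intro w h
        have := hlow w
        rw [h] at this
        simp only [cfresh] at this
        omega
      · intro w
        rw [Function.update_apply]
        split
        · simp only [cfresh]; push_cast; omega
        · have := hlow w; push_cast; omega

/-- The main inductive simulation lemma. -/
lemma main {W N : ℕ} :
    ∀ (C' : List (Fin W × Fin W)) (t : ℕ) (σ : Fin W → ℤ × ℤ)
      (v : Fin W → Bool) (S : Finset (ℤ × ℤ)),
      (∀ g ∈ C', g.1 ≠ g.2) →
      t + C'.length ≤ N →
      Function.Injective σ →
      (∀ w, (σ w).2 = 1) →
      (∀ w, -(t : ℤ) ≤ (σ w).1) →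
      (∀ g ∈ C', (σ g.1).1 ≤ 2 * N ∧ (σ g.2).1 ≤ 2 * N) →
      (∀ p ∈ S, p.2 = 1 → -(t : ℤ) ≤ p.1) →
      Qset N ⊆ S →
      (∀ w, σ w ∈ S ↔ v w = true) →
      ∀ j, (finalSites σ t C' j ∈ (mkPaths σ t C').foldl IDLA.deposit S ↔
        C'.foldl (fun v g => CompCircuit.applyGate g v) v j = true) := by
  intro C'
  induction C' with
  | nil =>
      intro t σ v S _ _ _ _ _ _ _ _ hlink j
      exact hlink j
  | cons g rest ih =>
      intro t σ v S hne hlen hinj hy hlow hgate hS1 hQS hlink j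
      have hij : g.1 ≠ g.2 := hne g (List.mem_cons_self)
      have ht1 : t + 1 ≤ N := by simp at hlen; omega
      set A : ℤ := (σ g.1).1 with hA
      set B : ℤ := (σ g.2).1 with hB
      set Cc : ℤ := -(t : ℤ) - 1 with hCc
      have hσi : σ g.1 = (A, 1) := by
        rw [hA]; exact Prod.ext rfl (hy g.1)
      have hσj : σ g.2 = (B, 1) := by
        rw [hB]; exact Prod.ext rfl (hy g.2)
      have hA1 : -(t : ℤ) ≤ A := hlow g.1
      have hB1 : -(t : ℤ) ≤ B := hlow g.2
      have hA2 : A ≤ 2 * N := (hgate g (List.mem_cons_self)).1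
      have hB2 : B ≤ 2 * N := (hgate g (List.mem_cons_self)).2
      have hAB : A ≠ B := by
        intro h
        exact hij (hinj (by rw [hσi, hσj, h]))
      -- corridor cells are occupied
      have hcorr : ∀ a b : ℤ, -(N:ℤ) ≤ a → a ≤ 2*N → -(N:ℤ) ≤ b → b ≤ 2*N →
          ∀ x ∈ hseg a b, ((x, 0) : ℤ × ℤ) ∈ S := by
        intro a b ha1 ha2 hb1 hb2 x hx
        rcases mem_hseg hx with ⟨h1, h2⟩ | ⟨h1, h2⟩ <;>
          exact hQS (mem_Qset (by omega) (by omega))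
      have hfresh : ((Cc, 1) : ℤ × ℤ) ∉ S := by
        intro h
        have := hS1 _ h rfl
        simp only [hCc] at this
        omega
      have hdep : IDLA.deposit S (gatePath A B Cc) =
          if ((A, 1) : ℤ × ℤ) ∈ S then
            (if ((B, 1) : ℤ × ℤ) ∈ S then insert (Cc, 1) S else insert (B, 1) S)
          else insert (A, 1) S :=
        deposit_gatePath
          (hcorr 0 A (by omega) (by omega) (by omega) (by omega))
          (hcorr A B (by omega) (by omega) (by omega) (by omega))
          (hcorr B Cc (by omega) (by omega) (by omega) (by omega))
          hfresh
      set S' : Finset (ℤ × ℤ) := IDLA.deposit S (gatePath A B Cc) with hS'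
      set σ' : Fin W → ℤ × ℤ := Function.update σ g.1 (cfresh t) with hσ'
      set v' : Fin W → Bool := CompCircuit.applyGate g v with hv'
      have hcfresh_ne : ∀ w, σ w ≠ cfresh t := by
        intro w h
        have := hlow w
        rw [h] at this
        simp only [cfresh] at this
        omega
      have hcCc : cfresh t = ((Cc, 1) : ℤ × ℤ) := by
        simp only [cfresh, hCc]
      -- the new occupied set adds a single site of second coordinate 1 and column ≥ -(t+1)
      have hS'cases : (S' = insert (σ g.1) S ∧ v g.1 = false) ∨
          (S' = insert (σ g.2) S ∧ v g.1 = true ∧ v g.2 = false) ∨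
          (S' = insert (cfresh t) S ∧ v g.1 = true ∧ v g.2 = true) := by
        by_cases hvi : v g.1 = true
        · by_cases hvj : v g.2 = true
          · refine Or.inr (Or.inr ⟨?_, hvi, hvj⟩)
            rw [hdep, if_pos, if_pos, hcCc]
            · rw [← hσj]; exact (hlink g.2).2 hvj
            · rw [← hσi]; exact (hlink g.1).2 hvi
          · refine Or.inr (Or.inl ⟨?_, hvi, by simpa using hvj⟩)
            rw [hdep, if_pos, if_neg, hσj]
            · rw [← hσj]; intro h; exact hvj ((hlink g.2).1 h)
            · rw [← hσi]; exact (hlink g.1).2 hvi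
        · refine Or.inl ⟨?_, by simpa using hvi⟩
          rw [hdep, if_neg, hσi]
          rw [← hσi]; intro h; exact hvi ((hlink g.1).1 h)
      -- apply the inductive hypothesis
      have hinj' : Function.Injective σ' :=
        update_injective hinj hcfresh_ne g.1
      have hy' : ∀ w, (σ' w).2 = 1 := by
        intro w
        rw [hσ', Function.update_apply]
        split
        · rfl
        · exact hy w
      have hlow' : ∀ w, -((t + 1 : ℕ) : ℤ) ≤ (σ' w).1 := by
        intro w
        rw [hσ', Function.update_apply]
        split
        · simp only [cfresh]; push_cast; omega
        · have := hlow w; push_cast; omega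
      have hgate' : ∀ g' ∈ rest, (σ' g'.1).1 ≤ 2 * N ∧ (σ' g'.2).1 ≤ 2 * N := by
        intro g' hg'
        constructor <;> rw [hσ', Function.update_apply] <;> split
        · simp only [cfresh]; omega
        · exact (hgate g' (List.mem_cons_of_mem _ hg')).1
        · simp only [cfresh]; omega
        · exact (hgate g' (List.mem_cons_of_mem _ hg')).2
      have hS1' : ∀ p ∈ S', p.2 = 1 → -((t + 1 : ℕ) : ℤ) ≤ p.1 := by
        intro p hp hp2
        have hins : ∀ q : ℤ × ℤ, -((t + 1 : ℕ) : ℤ) ≤ q.1 → p ∈ insert q S →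
            -((t + 1 : ℕ) : ℤ) ≤ p.1 := by
          intro q hq hmem
          rcases Finset.mem_insert.1 hmem with rfl | hmem
          · exact hq
          · have := hS1 p hmem hp2; push_cast at this ⊢; omega
        rcases hS'cases with ⟨he, -⟩ | ⟨he, -⟩ | ⟨he, -⟩ <;> rw [he] at hp
        · exact hins _ (by push_cast; omega) hp
        · exact hins _ (by push_cast; omega) hp
        · exact hins _ (by simp only [cfresh]; push_cast; omega) hp
      have hQS' : Qset N ⊆ S' := by
        rcases hS'cases with ⟨he, -⟩ | ⟨he, -⟩ | ⟨he, -⟩ <;> rw [he] <;>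
          exact hQS.trans (Finset.subset_insert _ _)
      have hlink' : ∀ w, σ' w ∈ S' ↔ v' w = true := by
        intro w
        have happly1 : v' g.1 = (v g.1 && v g.2) := by
          simp [hv', CompCircuit.applyGate]
        have happly2 : v' g.2 = (v g.1 || v g.2) := by
          simp [hv', CompCircuit.applyGate, hij.symm]
        have happly3 : ∀ u, u ≠ g.1 → u ≠ g.2 → v' u = v u := by
          intro u h1 h2
          simp [hv', CompCircuit.applyGate, h1, h2]
        have hσ'1 : σ' g.1 = cfresh t := by simp [hσ']
        have hσ'o : ∀ u, u ≠ g.1 → σ' u = σ u := by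
          intro u h1
          simp [hσ', Function.update_apply, h1]
        have hfreshS : cfresh t ∉ S := by rw [hcCc]; exact hfresh
        have hfresh_ne_σ : ∀ u, cfresh t ≠ σ u := fun u h => hcfresh_ne u h.symm
        rcases hS'cases with ⟨he, hvi⟩ | ⟨he, hvi, hvj⟩ | ⟨he, hvi, hvj⟩
        · -- v g.1 = false : particle stuck at σ g.1
          by_cases hw1 : w = g.1
          · subst hw1
            rw [hσ'1, he, happly1, hvi]
            simp only [Bool.false_and]
            constructor
            · intro h
              rcases Finset.mem_insert.1 h with h | h
              · exact absurd h.symm (hcfresh_ne g.1)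
              · exact absurd h hfreshS
            · intro h; exact absurd h (by simp)
          · rw [hσ'o w hw1, he]
            have hne1 : σ w ≠ σ g.1 := fun h => hw1 (hinj h)
            rw [Finset.mem_insert]
            by_cases hw2 : w = g.2
            · subst hw2
              rw [happly2, hvi]
              simp only [Bool.false_or]
              rw [← hlink g.2]
              exact ⟨fun h => h.resolve_left hne1, Or.inr⟩
            · rw [happly3 w hw1 hw2, ← hlink w]
              exact ⟨fun h => h.resolve_left hne1, Or.inr⟩
        · -- v g.1 = true, v g.2 = false : particle stuck at σ g.2
          by_cases hw1 : w = g.1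
          · subst hw1
            rw [hσ'1, he, happly1, hvi, hvj]
            simp only [Bool.and_false]
            constructor
            · intro h
              rcases Finset.mem_insert.1 h with h | h
              · exact absurd h (hfresh_ne_σ g.2)
              · exact absurd h hfreshS
            · intro h; exact absurd h (by simp)
          · rw [hσ'o w hw1, he, Finset.mem_insert]
            by_cases hw2 : w = g.2
            · subst hw2
              rw [happly2, hvi]
              simp
            · have hne2 : σ w ≠ σ g.2 := fun h => hw2 (hinj h)
              rw [happly3 w hw1 hw2, ← hlink w]
              exact ⟨fun h => h.resolve_left hne2, Or.inr⟩
        · -- both true : particle stuck at the fresh cell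
          by_cases hw1 : w = g.1
          · subst hw1
            rw [hσ'1, he, happly1, hvi, hvj]
            simp
          · rw [hσ'o w hw1, he, Finset.mem_insert]
            have hne3 : σ w ≠ cfresh t := hcfresh_ne w
            by_cases hw2 : w = g.2
            · subst hw2
              rw [happly2, hvi, hvj]
              simp only [Bool.true_or]
              exact ⟨fun _ => trivial, fun _ => Or.inr ((hlink g.2).2 hvj)⟩
            · rw [happly3 w hw1 hw2, ← hlink w]
              exact ⟨fun h => h.resolve_left hne3, Or.inr⟩
      have goal := ih (t + 1) σ' v' S'
        (fun g' hg' => hne g' (List.mem_cons_of_mem _ hg'))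
        (by simp at hlen ⊢; omega) hinj' hy' hlow' hgate' hS1' hQS' hlink' j
      rw [finalSites, mkPaths]
      simp only [List.foldl_cons]
      exact goal

def colF {W : ℕ} (N : ℕ) (L : List (Fin W)) (w : Fin W) : ℤ :=
  if w ∈ L then (L.idxOf w : ℤ) else 2 * N + w.val

def inpF {W : ℕ} (N : ℕ) (L : List (Fin W)) (w : Fin W) : ℤ × ℤ := (colF N L w, 1)

lemma flatMap_pairs_length {W : ℕ} (C : List (Fin W × Fin W)) :
    (C.flatMap fun g => [g.1, g.2]).length = 2 * C.length := by
  induction C with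
  | nil => rfl
  | cons g rest ih => simp [ih]; omega

end IDLAHard

/-- For every comparator circuit `C` with `N` gates on `W` wires there
exist a finite set `Q ⊆ ℤ²` containing a designated origin `o`, pairwise distinct input
sites `inp w ∉ Q`, pairwise distinct output sites `out w`, and a sequence of `N` finite
nearest-neighbour lattice paths, each starting at `o` and of length at most
`C₀ * (N + 1)` for an absolute constant `C₀`, all depending only on `C`, such that for
every input assignment `x`: starting from the occupied set `Q` together with the input
sites of the true wires and sequentially depositing the `N` particles along the paths,
the final occupied set contains `out j` iff `eval C x j = true`, for every wire `j`. -/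
theorem internal_dla_prediction_is_CC_hard :
    ∃ C₀ : ℕ, ∀ (W : ℕ) (C : List (Fin W × Fin W)), (∀ g ∈ C, g.1 ≠ g.2) →
      ∃ (Q : Finset (ℤ × ℤ)) (o : ℤ × ℤ) (inp out : Fin W → ℤ × ℤ)
        (ps : List (List (ℤ × ℤ))),
        o ∈ Q ∧
        Function.Injective inp ∧ (∀ w, inp w ∉ Q) ∧
        Function.Injective out ∧
        ps.length = C.length ∧
        (∀ p ∈ ps, p.head? = some o ∧ List.Chain' IDLA.Adj p ∧
          p.length ≤ C₀ * (C.length + 1)) ∧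
        ∀ x : Fin W → Bool, ∀ j : Fin W,
          (out j ∈ ps.foldl IDLA.deposit
              (Q ∪ (Finset.univ.filter (fun w => x w = true)).image inp))
            ↔ CompCircuit.eval C x j = true := by
  classical
  refine ⟨16, fun W C hC => ?_⟩
  set N := C.length with hN
  set L : List (Fin W) := (C.flatMap fun g => [g.1, g.2]).dedup with hLdef
  have hLlen : L.length ≤ 2 * N := by
    calc L.length ≤ (C.flatMap fun g => [g.1, g.2]).length :=
          (List.dedup_sublist _).length_le
      _ = 2 * N := IDLAHard.flatMap_pairs_length C
  have hcol_nonneg : ∀ w, 0 ≤ IDLAHard.colF N L w := by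
    intro w
    unfold IDLAHard.colF
    split <;> positivity
  have hcol_mem : ∀ w ∈ L, IDLAHard.colF N L w < 2 * N := by
    intro w hw
    unfold IDLAHard.colF
    rw [if_pos hw]
    have := List.idxOf_lt_length_iff.2 hw
    push_cast
    omega
  have hcol_inj : Function.Injective (IDLAHard.colF N L) := by
    intro a b hab
    unfold IDLAHard.colF at hab
    by_cases ha : a ∈ L <;> by_cases hb : b ∈ L
    · rw [if_pos ha, if_pos hb] at hab
      exact (List.idxOf_inj ha).1 (by exact_mod_cast hab)
    · rw [if_pos ha, if_neg hb] at hab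
      have := List.idxOf_lt_length_iff.2 ha
      exfalso
      have hval : (0:ℤ) ≤ b.val := by positivity
      push_cast at hab
      omega
    · rw [if_neg ha, if_pos hb] at hab
      have := List.idxOf_lt_length_iff.2 hb
      exfalso
      have hval : (0:ℤ) ≤ a.val := by positivity
      push_cast at hab
      omega
    · rw [if_neg ha, if_neg hb] at hab
      have : (a.val : ℤ) = b.val := by omega
      exact Fin.ext (by exact_mod_cast this)
  have hinp_inj : Function.Injective (IDLAHard.inpF N L) := by
    intro a b hab
    exact hcol_inj (congrArg Prod.fst hab)
  have hinp_fst : ∀ w, (IDLAHard.inpF N L w).1 = IDLAHard.colF N L w := fun w => rfl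
  have hinp_snd : ∀ w, (IDLAHard.inpF N L w).2 = 1 := fun w => rfl
  have hgate_mem : ∀ g ∈ C, g.1 ∈ L ∧ g.2 ∈ L := by
    intro g hg
    constructor <;> rw [hLdef, List.mem_dedup, List.mem_flatMap] <;>
      exact ⟨g, hg, by simp⟩
  have hgate_bd : ∀ g ∈ C, (IDLAHard.inpF N L g.1).1 ≤ 2 * N ∧
      (IDLAHard.inpF N L g.2).1 ≤ 2 * N := by
    intro g hg
    rw [hinp_fst, hinp_fst]
    exact ⟨le_of_lt (hcol_mem _ (hgate_mem g hg).1),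
      le_of_lt (hcol_mem _ (hgate_mem g hg).2)⟩
  have hinp_low : ∀ w, -((0:ℕ) : ℤ) ≤ (IDLAHard.inpF N L w).1 := by
    intro w
    rw [hinp_fst]
    push_cast
    exact hcol_nonneg w
  refine ⟨IDLAHard.Qset N, ((0 : ℤ), (0 : ℤ)), IDLAHard.inpF N L,
    IDLAHard.finalSites (IDLAHard.inpF N L) 0 C,
    IDLAHard.mkPaths (IDLAHard.inpF N L) 0 C, ?_, hinp_inj, ?_, ?_, ?_, ?_, ?_⟩
  · exact IDLAHard.mem_Qset (by omega) (by omega)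
  · intro w h
    have h0 := IDLAHard.Qset_snd h
    rw [hinp_snd] at h0
    exact one_ne_zero h0
  · exact IDLAHard.finalSites_inj C 0 _ hinp_inj hinp_low
  · exact IDLAHard.mkPaths_length C _ 0
  · intro p hp
    exact IDLAHard.mkPaths_props C 0 _ (by omega) hinp_low hgate_bd p hp
  · intro x j
    refine IDLAHard.main (N := N) C 0 _ x _ hC (by omega) hinp_inj
      hinp_snd hinp_low hgate_bd ?_ Finset.subset_union_left ?_ j
    · intro p hp hp2
      rcases Finset.mem_union.1 hp with hp | hp
      · have := IDLAHard.Qset_snd hp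
        exfalso
        omega
      · obtain ⟨w, -, rfl⟩ := Finset.mem_image.1 hp
        exact hinp_low w
    · intro w
      rw [Finset.mem_union]
      constructor
      · intro h
        rcases h with h | h
        · exfalso
          have h0 := IDLAHard.Qset_snd h
          rw [hinp_snd] at h0
          exact one_ne_zero h0
        · obtain ⟨u, hu, huw⟩ := Finset.mem_image.1 h
          rw [Finset.mem_filter] at hu
          exact (hinp_inj huw) ▸ hu.2
      · intro h
        exact Or.inr (Finset.mem_image.2 ⟨w,
          Finset.mem_filter.2 ⟨Finset.mem_univ _, h⟩, rfl⟩)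
end

section
/- Fix n, and for each i ∈ {1, …, n} a path r_i(1), …, r_i(ℓ_i) of pairwise distinct sites with ℓ_i ≥ i. Then there is exactly one configuration (τ_1, …, τ_n) that is both well-ordered and singly occupied, namely the sequential configuration defined recursively by τ_i = min { t : r_i(t) ∉ {s_1, …, s_{i−1}} } (which exists because ℓ_i ≥ i and the sites of path i are distinct). Equivalently, the sequential configuration is the unique well-ordered configuration with energy E = 0. -/
namespace IDLA

variable {n : ℕ} {α : Type*} [DecidableEq α] {ℓ : Fin n → ℕ}

/-- The cluster: the union of the live segments `r i t`, `t ≤ τ i`, of the `n` paths. -/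
def cluster (r : ∀ i, Fin (ℓ i) → α) (τ : ∀ i, Fin (ℓ i)) : Finset α :=
  Finset.univ.biUnion fun i => (Finset.univ.filter fun t => t ≤ τ i).image (r i)

/-- `mult r τ z` is the number of labels at `z`, i.e. the number of paths whose
sticking point `s i = r i (τ i)` equals `z`. -/
def mult (r : ∀ i, Fin (ℓ i) → α) (τ : ∀ i, Fin (ℓ i)) (z : α) : ℕ :=
  (Finset.univ.filter fun i => r i (τ i) = z).card

/-- The energy `E = ∑_{z ∈ S} |m(z) − 1|` of a configuration. -/
def energy (r : ∀ i, Fin (ℓ i) → α) (τ : ∀ i, Fin (ℓ i)) : ℕ :=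
  ∑ z ∈ cluster r τ, ((mult r τ z : ℤ) - 1).natAbs

/-- A configuration is well-ordered if for all `i, j` and all `t < τ i`,
`r i t = s j` implies `j < i`. -/
def WellOrdered (r : ∀ i, Fin (ℓ i) → α) (τ : ∀ i, Fin (ℓ i)) : Prop :=
  ∀ (i j : Fin n) (t : Fin (ℓ i)), t < τ i → r i t = r j (τ j) → j < i

/-- A configuration is singly occupied if `m(z) = 1` for every cluster site `z`. -/
def SinglyOccupied (r : ∀ i, Fin (ℓ i) → α) (τ : ∀ i, Fin (ℓ i)) : Prop :=
  ∀ z ∈ cluster r τ, mult r τ z = 1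

/-- The sequential configuration: `τ i` is the first time `t` at which `r i t` is not a
sticking point of an earlier path, i.e. `τ_i = min { t : r_i(t) ∉ {s_1, …, s_{i−1}} }`. -/
def SeqConfig (r : ∀ i, Fin (ℓ i) → α) (τ : ∀ i, Fin (ℓ i)) : Prop :=
  ∀ i : Fin n, (∀ j, j < i → r j (τ j) ≠ r i (τ i)) ∧
    ∀ t : Fin (ℓ i), t < τ i → ∃ j, j < i ∧ r j (τ j) = r i t

end IDLA

namespace IDLAProof
set_option linter.unusedSectionVars false

open IDLA

variable {n : ℕ} {α : Type*} [DecidableEq α] {ℓ : Fin n → ℕ}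

lemma mem_cluster {r : ∀ i, Fin (ℓ i) → α} {τ : ∀ i, Fin (ℓ i)} {z : α} :
    z ∈ cluster r τ ↔ ∃ i, ∃ t, t ≤ τ i ∧ r i t = z := by
  simp [cluster]

lemma stick_mem_cluster {r : ∀ i, Fin (ℓ i) → α} {τ : ∀ i, Fin (ℓ i)} (i : Fin n) :
    r i (τ i) ∈ cluster r τ :=
  mem_cluster.mpr ⟨i, τ i, le_refl _, rfl⟩

lemma fresh {m : ℕ} (f : Fin m → α) (hf : Function.Injective f) (S : Finset α)
    (hS : S.card < m) :
    ((Finset.univ : Finset (Fin m)).filter fun t => f t ∉ S).Nonempty := by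
  by_contra h
  rw [Finset.not_nonempty_iff_eq_empty, Finset.filter_eq_empty_iff] at h
  have hsub : Finset.univ.image f ⊆ S := by
    intro z hz
    obtain ⟨t, _, rfl⟩ := Finset.mem_image.mp hz
    have := h (Finset.mem_univ t)
    simpa using this
  have := Finset.card_le_card hsub
  rw [Finset.card_image_of_injective _ hf, Finset.card_univ, Fintype.card_fin] at this
  omega

/-- The sequential configuration, constructed by strong recursion. -/
noncomputable def seqTau (hℓ : ∀ i : Fin n, (i : ℕ) + 1 ≤ ℓ i)
    (r : ∀ i, Fin (ℓ i) → α) (hr : ∀ i, Function.Injective (r i)) (i : Fin n) :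
    Fin (ℓ i) :=
  (Finset.univ.filter fun t : Fin (ℓ i) =>
      r i t ∉ (Finset.univ.filter fun j : Fin n => j < i).attach.image
        fun j => r j.1 (seqTau hℓ r hr j.1)).min'
    (by
      apply fresh (r i) (hr i)
      calc ((Finset.univ.filter fun j : Fin n => j < i).attach.image
            fun j => r j.1 (seqTau hℓ r hr j.1)).card
          ≤ (Finset.univ.filter fun j : Fin n => j < i).attach.card :=
            Finset.card_image_le
        _ = (Finset.univ.filter fun j : Fin n => j < i).card := Finset.card_attach
        _ = (i : ℕ) := by
            have : (Finset.univ.filter fun j : Fin n => j < i) = Finset.Iio i := by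
              ext j; simp
            rw [this, Fin.card_Iio]
        _ < ℓ i := hℓ i)
termination_by (i : ℕ)
decreasing_by all_goals exact (Finset.mem_filter.mp j.2).2

lemma seqTau_spec (hℓ : ∀ i : Fin n, (i : ℕ) + 1 ≤ ℓ i)
    (r : ∀ i, Fin (ℓ i) → α) (hr : ∀ i, Function.Injective (r i)) :
    SeqConfig r (seqTau hℓ r hr) := by
  intro i
  have key : seqTau hℓ r hr i ∈ (Finset.univ.filter fun t : Fin (ℓ i) =>
        r i t ∉ (Finset.univ.filter fun j : Fin n => j < i).attach.image
          fun j => r j.1 (seqTau hℓ r hr j.1)) ∧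
      ∀ t : Fin (ℓ i), t ∈ (Finset.univ.filter fun t : Fin (ℓ i) =>
        r i t ∉ (Finset.univ.filter fun j : Fin n => j < i).attach.image
          fun j => r j.1 (seqTau hℓ r hr j.1)) → seqTau hℓ r hr i ≤ t := by
    conv_lhs => rw [seqTau]
    rw [seqTau]
    exact ⟨Finset.min'_mem _ _, fun t ht => Finset.min'_le _ _ ht⟩
  constructor
  · intro j hj hne
    apply (Finset.mem_filter.mp key.1).2
    exact Finset.mem_image.mpr ⟨⟨j, by simp [hj]⟩, Finset.mem_attach _ _, hne⟩
  · intro t ht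
    by_contra hcon
    push_neg at hcon
    have htmem : t ∈ (Finset.univ.filter fun t : Fin (ℓ i) =>
        r i t ∉ (Finset.univ.filter fun j : Fin n => j < i).attach.image
          fun j => r j.1 (seqTau hℓ r hr j.1)) := by
      simp only [Finset.mem_filter, Finset.mem_univ, true_and]
      intro hmem'
      obtain ⟨j, _, hj⟩ := Finset.mem_image.mp hmem'
      exact hcon j.1 (Finset.mem_filter.mp j.2).2 hj
    exact absurd (key.2 t htmem) (not_le.mpr ht)

/-- Sticking points of a `SeqConfig` are pairwise distinct. -/
lemma seq_stick_injective {r : ∀ i, Fin (ℓ i) → α} {τ : ∀ i, Fin (ℓ i)}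
    (hτ : SeqConfig r τ) {i j : Fin n} (h : r i (τ i) = r j (τ j)) : i = j := by
  rcases lt_trichotomy i j with hij | hij | hij
  · exact absurd h ((hτ j).1 i hij)
  · exact hij
  · exact absurd h.symm ((hτ i).1 j hij)

lemma seqConfig_unique {r : ∀ i, Fin (ℓ i) → α} {τ σ : ∀ i, Fin (ℓ i)}
    (hτ : SeqConfig r τ) (hσ : SeqConfig r σ) : τ = σ := by
  have key : ∀ m : ℕ, ∀ hm : m < n, τ ⟨m, hm⟩ = σ ⟨m, hm⟩ := by
    intro m
    induction m using Nat.strong_induction_on with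
    | _ m ih =>
      intro hm
      set i : Fin n := ⟨m, hm⟩ with hi
      have ih' : ∀ j : Fin n, j < i → τ j = σ j := fun j hj => by
        have := ih j.1 hj j.2
        simpa using this
      rcases lt_trichotomy (τ i) (σ i) with h | h | h
      · exfalso
        obtain ⟨j, hj, hje⟩ := (hσ i).2 (τ i) h
        rw [← ih' j hj] at hje
        exact (hτ i).1 j hj hje
      · exact h
      · exfalso
        obtain ⟨j, hj, hje⟩ := (hτ i).2 (σ i) h
        rw [ih' j hj] at hje
        exact (hσ i).1 j hj hje
  funext i
  have := key i.1 i.2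
  simpa using this

lemma seqConfig_iff {r : ∀ i, Fin (ℓ i) → α} {τ : ∀ i, Fin (ℓ i)} :
    (WellOrdered r τ ∧ SinglyOccupied r τ) ↔ SeqConfig r τ := by
  constructor
  · rintro ⟨hwo, hso⟩ i
    constructor
    · intro j hj hne
      have hmem := stick_mem_cluster (r := r) (τ := τ) i
      have hcard := hso _ hmem
      have hji : j ∈ Finset.univ.filter fun k => r k (τ k) = r i (τ i) := by
        simp [hne]
      have hii : i ∈ Finset.univ.filter fun k => r k (τ k) = r i (τ i) := by simp
      have : ({j, i} : Finset (Fin n)) ⊆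
          Finset.univ.filter fun k => r k (τ k) = r i (τ i) := by
        intro k hk
        rcases Finset.mem_insert.mp hk with rfl | hk
        · exact hji
        · rw [Finset.mem_singleton.mp hk]; exact hii
      have hle := Finset.card_le_card this
      rw [Finset.card_pair (ne_of_lt hj)] at hle
      rw [mult] at hcard
      omega
    · intro t ht
      have hmem : r i t ∈ cluster r τ := mem_cluster.mpr ⟨i, t, le_of_lt ht, rfl⟩
      have hcard := hso _ hmem
      rw [mult, Finset.card_eq_one] at hcard
      obtain ⟨j, hj⟩ := hcard
      have hjmem : j ∈ Finset.univ.filter fun k => r k (τ k) = r i t := by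
        rw [hj]; exact Finset.mem_singleton_self _
      have hje : r j (τ j) = r i t := (Finset.mem_filter.mp hjmem).2
      exact ⟨j, hwo i j t ht hje.symm, hje⟩
  · intro hseq
    constructor
    · intro i j t ht hje
      obtain ⟨k, hk, hke⟩ := (hseq i).2 t ht
      have : k = j := seq_stick_injective hseq (hke.trans hje)
      rwa [this] at hk
    · intro z hz
      obtain ⟨i, t, htle, rfl⟩ := mem_cluster.mp hz
      rw [mult, Finset.card_eq_one]
      rcases eq_or_lt_of_le htle with heq | hlt
      · refine ⟨i, ?_⟩
        ext k
        simp only [Finset.mem_filter, Finset.mem_univ, true_and, Finset.mem_singleton]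
        constructor
        · intro hke
          exact seq_stick_injective hseq (hke.trans (by rw [heq]))
        · rintro rfl; rw [heq]
      · obtain ⟨j, _, hje⟩ := (hseq i).2 t hlt
        refine ⟨j, ?_⟩
        ext k
        simp only [Finset.mem_filter, Finset.mem_univ, true_and, Finset.mem_singleton]
        constructor
        · intro hke
          exact seq_stick_injective hseq (hke.trans hje.symm)
        · rintro rfl; exact hje

lemma singly_iff_energy {r : ∀ i, Fin (ℓ i) → α} {τ : ∀ i, Fin (ℓ i)} :
    SinglyOccupied r τ ↔ energy r τ = 0 := by
  rw [energy, Finset.sum_eq_zero_iff]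
  constructor
  · intro h z hz
    rw [h z hz]
    simp
  · intro h z hz
    have := h z hz
    rw [Int.natAbs_eq_zero, sub_eq_zero] at this
    exact_mod_cast this

end IDLAProof

/-- For `n` paths of pairwise distinct sites with `ℓ i ≥ i` (in
0-indexed form, `ℓ i ≥ i + 1`), there is exactly one configuration that is both
well-ordered and singly occupied, namely the sequential configuration defined by
`τ_i = min { t : r_i(t) ∉ {s_1, …, s_{i−1}} }`; equivalently, the sequential
configuration is the unique well-ordered configuration with energy `E = 0`. -/
theorem sequential_configuration_unique
    {n : ℕ} {α : Type*} [DecidableEq α] {ℓ : Fin n → ℕ}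
    (hℓ : ∀ i : Fin n, (i : ℕ) + 1 ≤ ℓ i)
    (r : ∀ i, Fin (ℓ i) → α) (hr : ∀ i, Function.Injective (r i)) :
    (∃! τ : ∀ i, Fin (ℓ i), IDLA.WellOrdered r τ ∧ IDLA.SinglyOccupied r τ) ∧
    (∀ τ : ∀ i, Fin (ℓ i),
      (IDLA.WellOrdered r τ ∧ IDLA.SinglyOccupied r τ) ↔ IDLA.SeqConfig r τ) ∧
    (∀ τ : ∀ i, Fin (ℓ i), IDLA.WellOrdered r τ →
      (IDLA.SinglyOccupied r τ ↔ IDLA.energy r τ = 0)) := by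
  refine ⟨⟨IDLAProof.seqTau hℓ r hr, ?_, ?_⟩, fun τ => IDLAProof.seqConfig_iff, fun τ _ =>
    IDLAProof.singly_iff_energy⟩
  · exact IDLAProof.seqConfig_iff.mpr (IDLAProof.seqTau_spec hℓ r hr)
  · intro σ hσ
    exact IDLAProof.seqConfig_unique (IDLAProof.seqConfig_iff.mp hσ)
      (IDLAProof.seqTau_spec hℓ r hr)
end

section
/- A pebble move preserves well-ordering and never increases the energy, with the following exact energy change: suppose the configuration is well-ordered, r is a multiply occupied site with pebble index i, and the destination of label i exists. Then the configuration obtained by the pebble move (replacing τ_i by the destination time) is again well-ordered, and its energy E' satisfies: E' = E − 2 if the destination is a hole; E' = E − 1 if the destination is not in the cluster S; and E' = E if the destination is an occupied site (necessarily with pebble index greater than i). -/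
namespace IDLA

variable {n : ℕ} {α : Type*} [DecidableEq α] {ℓ : Fin n → ℕ}

/-- `z` is a possible destination for the label `i`: it is either (1) not in the
cluster `S`, or (2) an occupied site whose pebble index (the largest label sticking
there) exceeds `i`, or (3) a hole (a cluster site with no label) whose hole index (the
smallest label live there) exceeds `i`. -/
def IsDest (r : ∀ i, Fin (ℓ i) → α) (τ : ∀ i, Fin (ℓ i)) (i : Fin n) (z : α) : Prop :=
  z ∉ cluster r τ ∨
  (∃ j, i < j ∧ r j (τ j) = z) ∨
  (mult r τ z = 0 ∧ z ∈ cluster r τ ∧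
    ∀ j, (∃ t : Fin (ℓ j), t ≤ τ j ∧ r j t = z) → i < j)

lemma mem_cluster {r : ∀ i, Fin (ℓ i) → α} {τ : ∀ i, Fin (ℓ i)} {w : α} :
    w ∈ cluster r τ ↔ ∃ j, ∃ t : Fin (ℓ j), t ≤ τ j ∧ r j t = w := by
  simp [cluster]

lemma mult_update (r : ∀ i, Fin (ℓ i) → α) (τ : ∀ i, Fin (ℓ i)) (i : Fin n)
    (t' : Fin (ℓ i)) (w : α) :
    mult r (Function.update τ i t') w + (if r i (τ i) = w then 1 else 0)
      = mult r τ w + (if r i t' = w then 1 else 0) := by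
  unfold mult
  rw [Finset.card_filter, Finset.card_filter,
    ← Finset.sum_erase_add _ _ (Finset.mem_univ i),
    ← Finset.sum_erase_add _ _ (Finset.mem_univ i)]
  have h1 : ∀ j ∈ Finset.univ.erase i,
      (if r j (Function.update τ i t' j) = w then 1 else 0)
        = (if r j (τ j) = w then 1 else 0) := by
    intro j hj
    rw [Function.update_of_ne (Finset.mem_erase.mp hj).1]
  rw [Finset.sum_congr rfl h1, Function.update_self]
  ring

end IDLA

/-- A pebble move preserves well-ordering and never increases the
energy, with the exact energy change: suppose the configuration is well-ordered, the
site `r i (τ i)` is multiply occupied with pebble index `i` (i.e. `i` is the largest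
label sticking there), and `t' > τ i` is the first time after `τ i` at which the path of
`i` is at a destination.  Then the configuration obtained by replacing `τ i` with `t'`
is again well-ordered, and its energy `E'` satisfies: `E' = E − 2` if the destination is
a hole; `E' = E − 1` if the destination is not in the cluster `S`; and `E' = E` if the
destination is occupied (necessarily with pebble index greater than `i`). -/
theorem pebble_move_well_ordered_and_energy
    {n : ℕ} {α : Type*} [DecidableEq α] {ℓ : Fin n → ℕ}
    (r : ∀ i, Fin (ℓ i) → α) (hr : ∀ i, Function.Injective (r i))
    (τ : ∀ i, Fin (ℓ i)) (hwo : IDLA.WellOrdered r τ)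
    (i : Fin n)
    (hmult : 2 ≤ IDLA.mult r τ (r i (τ i)))
    (hpebble : ∀ j, r j (τ j) = r i (τ i) → j ≤ i)
    (t' : Fin (ℓ i)) (ht' : τ i < t')
    (hdest : IDLA.IsDest r τ i (r i t'))
    (hfirst : ∀ t : Fin (ℓ i), τ i < t → t < t' → ¬ IDLA.IsDest r τ i (r i t)) :
    IDLA.WellOrdered r (Function.update τ i t') ∧
    (IDLA.mult r τ (r i t') = 0 ∧ r i t' ∈ IDLA.cluster r τ →
      IDLA.energy r (Function.update τ i t') + 2 = IDLA.energy r τ) ∧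
    (r i t' ∉ IDLA.cluster r τ →
      IDLA.energy r (Function.update τ i t') + 1 = IDLA.energy r τ) ∧
    (1 ≤ IDLA.mult r τ (r i t') →
      IDLA.energy r (Function.update τ i t') = IDLA.energy r τ ∧
      ∃ j, i < j ∧ r j (τ j) = r i t') := by
  set τ' := Function.update τ i t' with hτ'def
  have hτ'i : τ' i = t' := Function.update_self i t' τ
  have hτ'ne : ∀ j, j ≠ i → τ' j = τ j := fun j hj => Function.update_of_ne hj t' τ
  have hsz : r i (τ i) ≠ r i t' := fun h => (ne_of_lt ht') (hr i h)
  -- multiplicities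
  have hms : IDLA.mult r τ' (r i (τ i)) + 1 = IDLA.mult r τ (r i (τ i)) := by
    have h := IDLA.mult_update r τ i t' (r i (τ i))
    have e1 : (if r i (τ i) = r i (τ i) then 1 else 0) = 1 := if_pos rfl
    have e2 : (if r i t' = r i (τ i) then (1:ℕ) else 0) = 0 := if_neg (Ne.symm hsz)
    rw [e1, e2, ← hτ'def] at h
    omega
  have hmz : IDLA.mult r τ' (r i t') = IDLA.mult r τ (r i t') + 1 := by
    have h := IDLA.mult_update r τ i t' (r i t')
    have e1 : (if r i (τ i) = r i t' then (1:ℕ) else 0) = 0 := if_neg hsz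
    have e2 : (if r i t' = r i t' then 1 else 0) = 1 := if_pos rfl
    rw [e1, e2, ← hτ'def] at h
    omega
  have hmw : ∀ w, w ≠ r i (τ i) → w ≠ r i t' → IDLA.mult r τ' w = IDLA.mult r τ w := by
    intro w h1 h2
    have h := IDLA.mult_update r τ i t' w
    have e1 : (if r i (τ i) = w then (1:ℕ) else 0) = 0 := if_neg (Ne.symm h1)
    have e2 : (if r i t' = w then (1:ℕ) else 0) = 0 := if_neg (Ne.symm h2)
    rw [e1, e2, ← hτ'def] at h
    omega
  -- cluster facts
  have hsub : IDLA.cluster r τ ⊆ IDLA.cluster r τ' := by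
    intro w hw
    obtain ⟨j, t, htj, hrw⟩ := IDLA.mem_cluster.mp hw
    by_cases hj : i = j
    · subst hj
      exact IDLA.mem_cluster.mpr ⟨i, t, by rw [hτ'i]; exact le_of_lt (lt_of_le_of_lt htj ht'), hrw⟩
    · exact IDLA.mem_cluster.mpr ⟨j, t, by rw [hτ'ne j (fun h => hj h.symm)]; exact htj, hrw⟩
  have hz_mem' : r i t' ∈ IDLA.cluster r τ' :=
    IDLA.mem_cluster.mpr ⟨i, t', by rw [hτ'i], rfl⟩
  have hs_mem : r i (τ i) ∈ IDLA.cluster r τ :=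
    IDLA.mem_cluster.mpr ⟨i, τ i, le_refl _, rfl⟩
  have hz_or : ∀ w ∈ IDLA.cluster r τ', w ∈ IDLA.cluster r τ ∨ w = r i t' := by
    intro w hw
    obtain ⟨j, t, htj, hrw⟩ := IDLA.mem_cluster.mp hw
    by_cases hj : i = j
    · subst hj
      rw [hτ'i] at htj
      rcases lt_or_eq_of_le htj with hlt | heq
      · rcases le_or_gt t (τ i) with hle | hgt
        · exact Or.inl (IDLA.mem_cluster.mpr ⟨i, t, hle, hrw⟩)
        · have hn := hfirst t hgt hlt
          rw [IDLA.IsDest, not_or] at hn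
          have : r i t ∈ IDLA.cluster r τ := not_not.mp hn.1
          exact Or.inl (hrw ▸ this)
      · exact Or.inr (by rw [← hrw, heq])
    · exact Or.inl (IDLA.mem_cluster.mpr ⟨j, t, (hτ'ne j (fun h => hj h.symm)) ▸ htj, hrw⟩)
  -- mult zero off cluster
  have hmult_zero : r i t' ∉ IDLA.cluster r τ → IDLA.mult r τ (r i t') = 0 := by
    intro hb
    by_contra h
    obtain ⟨j, hj⟩ := Finset.card_pos.mp (Nat.pos_of_ne_zero h)
    rw [Finset.mem_filter] at hj
    exact hb (IDLA.mem_cluster.mpr ⟨j, τ j, le_refl _, hj.2⟩)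
  have hmem_of_mult : 1 ≤ IDLA.mult r τ (r i t') → r i t' ∈ IDLA.cluster r τ := by
    intro h
    obtain ⟨j, hj⟩ := Finset.card_pos.mp h
    rw [Finset.mem_filter] at hj
    exact IDLA.mem_cluster.mpr ⟨j, τ j, le_refl _, hj.2⟩
  -- well-ordering
  have hWO : IDLA.WellOrdered r τ' := by
    intro a b t ht hab
    by_cases hb : i = b
    · subst hb
      rw [hτ'i] at hab
      by_cases ha : i = a
      · subst ha
        rw [hτ'i] at ht
        exact absurd (hr i hab) (ne_of_lt ht)
      · rw [hτ'ne a (fun h => ha h.symm)] at ht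
        rcases hdest with h1 | ⟨j, hij, hj⟩ | ⟨-, -, h3⟩
        · exact absurd (IDLA.mem_cluster.mpr ⟨a, t, ht.le, hab⟩) h1
        · exact lt_trans hij (hwo a j t ht (hab.trans hj.symm))
        · exact h3 a ⟨t, ht.le, hab⟩
    · rw [hτ'ne b (fun h => hb h.symm)] at hab
      by_cases ha : i = a
      · subst ha
        rw [hτ'i] at ht
        rcases lt_trichotomy t (τ i) with h | h | h
        · exact hwo i b t h hab
        · have hba : r b (τ b) = r i (τ i) := by rw [← hab, h]
          exact lt_of_le_of_ne (hpebble b hba) (Ne.symm hb)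
        · have hn := hfirst t h ht
          rw [IDLA.IsDest, not_or, not_or] at hn
          have h2 := hn.2.1
          push_neg at h2
          by_contra hc
          push_neg at hc
          exact h2 b (lt_of_le_of_ne hc hb) hab.symm
      · rw [hτ'ne a (fun h => ha h.symm)] at ht
        exact hwo a b t ht hab
  refine ⟨hWO, ?_, ?_, ?_⟩
  · -- hole case
    rintro ⟨hz0, hzS⟩
    have hSeq : IDLA.cluster r τ' = IDLA.cluster r τ := by
      apply Finset.Subset.antisymm _ hsub
      intro w hw
      rcases hz_or w hw with h | h
      · exact h
      · exact h ▸ hzS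
    have hpair : ({r i (τ i), r i t'} : Finset α) ⊆ IDLA.cluster r τ := by
      intro w hw
      rcases Finset.mem_insert.mp hw with h | h
      · exact h ▸ hs_mem
      · exact (Finset.mem_singleton.mp h) ▸ hzS
    unfold IDLA.energy
    rw [hSeq, ← Finset.sum_sdiff hpair, ← Finset.sum_sdiff hpair]
    have hcongr : ∀ w ∈ IDLA.cluster r τ \ {r i (τ i), r i t'},
        ((IDLA.mult r τ' w : ℤ) - 1).natAbs = ((IDLA.mult r τ w : ℤ) - 1).natAbs := by
      intro w hw
      obtain ⟨-, hw2⟩ := Finset.mem_sdiff.mp hw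
      rw [Finset.mem_insert, Finset.mem_singleton] at hw2
      push_neg at hw2
      rw [hmw w hw2.1 hw2.2]
    rw [Finset.sum_congr rfl hcongr, Finset.sum_pair hsz, Finset.sum_pair hsz]
    omega
  · -- off-cluster case
    intro hb
    have hz0 := hmult_zero hb
    have hSeq : IDLA.cluster r τ' = insert (r i t') (IDLA.cluster r τ) := by
      apply Finset.Subset.antisymm
      · intro w hw
        rcases hz_or w hw with h | h
        · exact Finset.mem_insert_of_mem h
        · exact h ▸ Finset.mem_insert_self _ _
      · intro w hw
        rcases Finset.mem_insert.mp hw with h | h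
        · exact h ▸ hz_mem'
        · exact hsub h
    unfold IDLA.energy
    rw [hSeq, Finset.sum_insert hb,
      Finset.sum_eq_sum_sdiff_singleton_add hs_mem
        (fun w => ((IDLA.mult r τ' w : ℤ) - 1).natAbs),
      Finset.sum_eq_sum_sdiff_singleton_add hs_mem
        (fun w => ((IDLA.mult r τ w : ℤ) - 1).natAbs)]
    have hcongr : ∀ w ∈ IDLA.cluster r τ \ {r i (τ i)},
        ((IDLA.mult r τ' w : ℤ) - 1).natAbs = ((IDLA.mult r τ w : ℤ) - 1).natAbs := by
      intro w hw
      obtain ⟨hw1, hw2⟩ := Finset.mem_sdiff.mp hw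
      rw [Finset.mem_singleton] at hw2
      have hwz : w ≠ r i t' := fun h => hb (h ▸ hw1)
      rw [hmw w hw2 hwz]
    rw [Finset.sum_congr rfl hcongr]
    omega
  · -- occupied case
    intro hm1
    have hzS := hmem_of_mult hm1
    have hSeq : IDLA.cluster r τ' = IDLA.cluster r τ := by
      apply Finset.Subset.antisymm _ hsub
      intro w hw
      rcases hz_or w hw with h | h
      · exact h
      · exact h ▸ hzS
    constructor
    · have hpair : ({r i (τ i), r i t'} : Finset α) ⊆ IDLA.cluster r τ := by
        intro w hw
        rcases Finset.mem_insert.mp hw with h | h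
        · exact h ▸ hs_mem
        · exact (Finset.mem_singleton.mp h) ▸ hzS
      unfold IDLA.energy
      rw [hSeq, ← Finset.sum_sdiff hpair, ← Finset.sum_sdiff hpair]
      have hcongr : ∀ w ∈ IDLA.cluster r τ \ {r i (τ i), r i t'},
          ((IDLA.mult r τ' w : ℤ) - 1).natAbs = ((IDLA.mult r τ w : ℤ) - 1).natAbs := by
        intro w hw
        obtain ⟨-, hw2⟩ := Finset.mem_sdiff.mp hw
        rw [Finset.mem_insert, Finset.mem_singleton] at hw2
        push_neg at hw2
        rw [hmw w hw2.1 hw2.2]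
      rw [Finset.sum_congr rfl hcongr, Finset.sum_pair hsz, Finset.sum_pair hsz]
      omega
    · rcases hdest with h1 | h2 | ⟨h3, -⟩
      · exact absurd hzS h1
      · exact h2
      · omega
end

section
/- A hole move is always allowed and never increases the energy: suppose the configuration is well-ordered and r ∈ S is a hole with hole index i, and let the hole move replace τ_i by the unique time t < τ_i with r_i(t) = r. Then the resulting configuration is again well-ordered, and its energy E' satisfies E' ≤ E; moreover, if the old sticking point s_i was multiply occupied (m(s_i) ≥ 2), then E' ≤ E − 2. -/
/-- A hole move is always allowed and never increases the energy:
suppose the configuration is well-ordered, `z ∈ S` is a hole (`m(z) = 0`) with hole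
index `i` (i.e. `i` is the least label whose live segment contains `z`), and let the
hole move replace `τ i` by the (unique) time `t < τ i` with `r i t = z`.  Then the
resulting configuration is again well-ordered and its energy `E'` satisfies `E' ≤ E`;
moreover, if the old sticking point `s i` was multiply occupied, then `E' ≤ E − 2`. -/
theorem hole_move_well_ordered_and_energy
    {n : ℕ} {α : Type*} [DecidableEq α] {ℓ : Fin n → ℕ}
    (r : ∀ i, Fin (ℓ i) → α) (hr : ∀ i, Function.Injective (r i))
    (τ : ∀ i, Fin (ℓ i)) (hwo : IDLA.WellOrdered r τ)
    (z : α) (hz : z ∈ IDLA.cluster r τ) (hhole : IDLA.mult r τ z = 0)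
    (i : Fin n)
    (hlive : ∃ t : Fin (ℓ i), t ≤ τ i ∧ r i t = z)
    (hmin : ∀ j, (∃ t : Fin (ℓ j), t ≤ τ j ∧ r j t = z) → i ≤ j)
    (t : Fin (ℓ i)) (ht : t < τ i) (hrt : r i t = z) :
    IDLA.WellOrdered r (Function.update τ i t) ∧
    IDLA.energy r (Function.update τ i t) ≤ IDLA.energy r τ ∧
    (2 ≤ IDLA.mult r τ (r i (τ i)) →
      IDLA.energy r (Function.update τ i t) + 2 ≤ IDLA.energy r τ) := by
  classical
  set τ' := Function.update τ i t with hτ'def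
  have hτ'i : τ' i = t := Function.update_self i t τ
  have hτ'j : ∀ j, j ≠ i → τ' j = τ j := fun j hj => Function.update_of_ne hj t τ
  have hempty : ∀ j : Fin n, r j (τ j) ≠ z := by
    intro j hj
    have hmem : j ∈ Finset.univ.filter (fun k => r k (τ k) = z) := by simp [hj]
    rw [IDLA.mult, Finset.card_eq_zero] at hhole
    rw [hhole] at hmem
    exact absurd hmem (Finset.notMem_empty j)
  have hzs : r i (τ i) ≠ z := hempty i
  -- well-ordering
  have hwo' : IDLA.WellOrdered r τ' := by
    intro a b u hu hub
    by_cases ha : a = i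
    · subst ha
      rw [hτ'i] at hu
      by_cases hb : b = a
      · rw [hb, hτ'i] at hub
        exact absurd (hr a hub) hu.ne
      · rw [hτ'j b hb] at hub
        exact hwo a b u (lt_trans hu ht) hub
    · rw [hτ'j a ha] at hu
      by_cases hb : b = i
      · rw [hb, hτ'i, hrt] at hub
        have hia : i ≤ a := hmin a ⟨u, le_of_lt hu, hub⟩
        rw [hb]
        exact lt_of_le_of_ne hia (Ne.symm ha)
      · rw [hτ'j b hb] at hub
        exact hwo a b u hu hub
  refine ⟨hwo', ?_⟩
  -- multiplicity facts
  have hms1 : 1 ≤ IDLA.mult r τ (r i (τ i)) :=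
    Finset.card_pos.mpr ⟨i, by simp [IDLA.mult]⟩
  have hm'z : IDLA.mult r τ' z = 1 := by
    rw [IDLA.mult, show (Finset.univ.filter fun j => r j (τ' j) = z) = {i} from ?_]
    · simp
    · ext j
      simp only [Finset.mem_filter, Finset.mem_univ, true_and, Finset.mem_singleton]
      constructor
      · intro hj
        by_contra hji
        rw [hτ'j j hji] at hj
        exact hempty j hj
      · rintro rfl
        rw [hτ'i]; exact hrt
  have hm's : IDLA.mult r τ' (r i (τ i)) + 1 = IDLA.mult r τ (r i (τ i)) := by
    have hfe : (Finset.univ.filter fun j => r j (τ' j) = r i (τ i))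
        = (Finset.univ.filter fun j => r j (τ j) = r i (τ i)).erase i := by
      ext j
      simp only [Finset.mem_filter, Finset.mem_univ, true_and, Finset.mem_erase]
      constructor
      · intro hj
        have hji : j ≠ i := by
          rintro rfl
          rw [hτ'i, hrt] at hj
          exact hzs hj.symm
        rw [hτ'j j hji] at hj
        exact ⟨hji, hj⟩
      · rintro ⟨hji, hj⟩
        rwa [hτ'j j hji]
    rw [IDLA.mult, IDLA.mult, hfe, Finset.card_erase_of_mem (by simp)]
    have : 1 ≤ (Finset.univ.filter fun j => r j (τ j) = r i (τ i)).card :=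
      Finset.card_pos.mpr ⟨i, by simp⟩
    omega
  have hm'w : ∀ w, w ≠ z → w ≠ r i (τ i) → IDLA.mult r τ' w = IDLA.mult r τ w := by
    intro w hwz hws
    rw [IDLA.mult, IDLA.mult]
    congr 1
    ext j
    simp only [Finset.mem_filter, Finset.mem_univ, true_and]
    by_cases hj : j = i
    · subst hj
      rw [hτ'i]
      constructor
      · intro h; exact absurd (hrt ▸ h : z = w) (Ne.symm hwz)
      · intro h; exact absurd h (fun h' => hws h'.symm)
    · rw [hτ'j j hj]
  -- cluster facts
  have hmemc : ∀ (σ : ∀ i, Fin (ℓ i)) (w : α),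
      w ∈ IDLA.cluster r σ ↔ ∃ j, ∃ u, u ≤ σ j ∧ r j u = w := by
    intro σ w
    simp [IDLA.cluster]
  have hsub : IDLA.cluster r τ' ⊆ IDLA.cluster r τ := by
    intro w hw
    rw [hmemc] at hw ⊢
    obtain ⟨j, u, hu, hru⟩ := hw
    by_cases hj : j = i
    · subst hj
      rw [hτ'i] at hu
      exact ⟨j, u, le_of_lt (lt_of_le_of_lt hu ht), hru⟩
    · rw [hτ'j j hj] at hu
      exact ⟨j, u, hu, hru⟩
  have hzc' : z ∈ IDLA.cluster r τ' := by
    rw [hmemc]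
    exact ⟨i, t, by rw [hτ'i], hrt⟩
  set g : α → ℕ := fun w => ((IDLA.mult r τ w : ℤ) - 1).natAbs with hg
  set g' : α → ℕ := fun w => ((IDLA.mult r τ' w : ℤ) - 1).natAbs with hg'
  have hE : IDLA.energy r τ = ∑ w ∈ IDLA.cluster r τ, g w := rfl
  have hE' : IDLA.energy r τ' = ∑ w ∈ IDLA.cluster r τ', g' w := rfl
  have hle : ∑ w ∈ IDLA.cluster r τ', g w ≤ IDLA.energy r τ := by
    rw [hE]
    exact Finset.sum_le_sum_of_subset hsub
  have hgz : g z = 1 := by simp [hg, hhole]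
  have hg'z : g' z = 0 := by simp [hg', hm'z]
  by_cases hsS' : r i (τ i) ∈ IDLA.cluster r τ'
  · -- s stays in the cluster
    have hsplit : ∀ h : α → ℕ, ∑ w ∈ IDLA.cluster r τ', h w
        = h z + (h (r i (τ i)) + ∑ w ∈ ((IDLA.cluster r τ').erase z).erase (r i (τ i)), h w) := by
      intro h
      rw [Finset.add_sum_erase _ h (Finset.mem_erase.mpr ⟨hzs, hsS'⟩),
        Finset.add_sum_erase _ h hzc']
    have hT : ∑ w ∈ ((IDLA.cluster r τ').erase z).erase (r i (τ i)), g' w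
        = ∑ w ∈ ((IDLA.cluster r τ').erase z).erase (r i (τ i)), g w := by
      apply Finset.sum_congr rfl
      intro w hw
      rw [Finset.mem_erase, Finset.mem_erase] at hw
      simp only [hg, hg']
      rw [hm'w w hw.2.1 hw.1]
    have h1 := hsplit g
    have h2 := hsplit g'
    rw [hT, hg'z] at h2
    rw [hgz] at h1
    have hgs : g (r i (τ i)) = ((IDLA.mult r τ (r i (τ i)) : ℤ) - 1).natAbs := rfl
    have hg's : g' (r i (τ i)) = ((IDLA.mult r τ' (r i (τ i)) : ℤ) - 1).natAbs := rfl
    rw [h1] at hle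
    constructor
    · rw [hE', h2]
      omega
    · intro hms2
      rw [hE', h2]
      omega
  · -- s leaves the cluster
    have hle1 : IDLA.energy r τ' ≤ IDLA.energy r τ := by
      rw [hE', ← Finset.add_sum_erase _ g' hzc', hg'z]
      have hT : ∑ w ∈ (IDLA.cluster r τ').erase z, g' w
          = ∑ w ∈ (IDLA.cluster r τ').erase z, g w := by
        apply Finset.sum_congr rfl
        intro w hw
        rw [Finset.mem_erase] at hw
        have hws : w ≠ r i (τ i) := by
          rintro rfl
          exact hsS' hw.2
        simp only [hg, hg']
        rw [hm'w w hw.1 hws]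
      rw [hT]
      refine le_trans ?_ hle
      calc 0 + ∑ w ∈ (IDLA.cluster r τ').erase z, g w
          ≤ g z + ∑ w ∈ (IDLA.cluster r τ').erase z, g w :=
            Nat.add_le_add_right (Nat.zero_le _) _
        _ = ∑ w ∈ IDLA.cluster r τ', g w := Finset.add_sum_erase _ g hzc'
    refine ⟨hle1, ?_⟩
    intro hms2
    exfalso
    have hms2' : 1 < (Finset.univ.filter fun j => r j (τ j) = r i (τ i)).card := by
      rw [IDLA.mult] at hms2; omega
    obtain ⟨j, hj, hji⟩ := Finset.exists_mem_ne hms2' i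
    rw [Finset.mem_filter] at hj
    apply hsS'
    rw [hmemc]
    exact ⟨j, τ j, by rw [hτ'j j hji], hj.2⟩
end
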